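/- arXiv:1001.4170 — 2 statements merged into one kernel-verified Lean document; each statement's English description precedes it below -/
import Mathlib

section
/- For every integer r ≥ 8, the number n whose binary representation is 1101111 followed by r zeros followed by 1101111 (i.e., n = 111·(2^{r+7} + 1)) satisfies s_2(n) = s_2(n^2) = 12. In particular, there are infinitely many odd n with s_2(n) = s_2(n^2) = 12. -/
lemma sum_digits_add_pow_mul (a b k : ℕ) (h : a < 2 ^ k) :
    (Nat.digits 2 (a + 2 ^ k * b)).sum = (Nat.digits 2 a).sum + (Nat.digits 2 b).sum := by
  rcases Nat.eq_zero_or_pos b with rfl | hb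
  · simp
  have hl : (Nat.digits 2 a).length ≤ k := by
    rcases Nat.eq_zero_or_pos a with rfl | ha
    · simp
    by_contra h'
    push_neg at h'
    have h1 : 2 ^ (k + 1) ≤ 2 ^ (Nat.digits 2 a).length := Nat.pow_le_pow_right two_pos h'
    have h2 := Nat.base_pow_length_digits_le 2 a one_lt_two ha.ne'
    have h3 : 2 ^ (k + 1) ≤ 2 * a := h1.trans h2
    rw [pow_succ] at h3
    omega
  obtain ⟨j, rfl⟩ := Nat.exists_eq_add_of_le hl
  rw [← Nat.digits_append_zeroes_append_digits one_lt_two hb]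
  simp

theorem k12_family :
    (∀ r : ℕ, 8 ≤ r →
      (Nat.digits 2 (111 * (2 ^ (r + 7) + 1))).sum = 12 ∧
      (Nat.digits 2 ((111 * (2 ^ (r + 7) + 1)) ^ 2)).sum = 12) ∧
    {n : ℕ | Odd n ∧ (Nat.digits 2 n).sum = 12 ∧
      (Nat.digits 2 (n ^ 2)).sum = 12}.Infinite := by
  have key : ∀ r : ℕ, 8 ≤ r →
      (Nat.digits 2 (111 * (2 ^ (r + 7) + 1))).sum = 12 ∧
      (Nat.digits 2 ((111 * (2 ^ (r + 7) + 1)) ^ 2)).sum = 12 := by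
    intro r hr
    have h7 : (111 : ℕ) < 2 ^ (r + 7) :=
      lt_of_lt_of_le (by norm_num : (111:ℕ) < 2 ^ 7)
        (Nat.pow_le_pow_right (by norm_num) (by omega))
    have h8 : (12321 : ℕ) < 2 ^ (r + 8) :=
      lt_of_lt_of_le (by norm_num : (12321:ℕ) < 2 ^ 14)
        (Nat.pow_le_pow_right (by norm_num) (by omega))
    have h6 : (12321 : ℕ) < 2 ^ (r + 6) :=
      lt_of_lt_of_le (by norm_num : (12321:ℕ) < 2 ^ 14)
        (Nat.pow_le_pow_right (by norm_num) (by omega))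
    constructor
    · have e : 111 * (2 ^ (r + 7) + 1) = 111 + 2 ^ (r + 7) * 111 := by ring
      rw [e, sum_digits_add_pow_mul _ _ _ h7]
      simp
    · have e : (111 * (2 ^ (r + 7) + 1)) ^ 2
          = 12321 + 2 ^ (r + 8) * (12321 + 2 ^ (r + 6) * 12321) := by ring
      rw [e, sum_digits_add_pow_mul _ _ _ h8, sum_digits_add_pow_mul _ _ _ h6]
      simp
  refine ⟨key, ?_⟩
  apply Set.infinite_of_injective_forall_mem
    (f := fun r : ℕ => 111 * (2 ^ ((r + 8) + 7) + 1))
  · intro a b hab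
    simp only at hab
    have h : 2 ^ (a + 8 + 7) = 2 ^ (b + 8 + 7) := by omega
    have := Nat.pow_right_injective (le_refl 2) h
    omega
  · intro r
    obtain ⟨h1, h2⟩ := key (r + 8) (by omega)
    refine ⟨?_, h1, h2⟩
    obtain ⟨c, hc⟩ : 2 ∣ 2 ^ (r + 8 + 7) := dvd_pow_self 2 (by omega)
    exact ⟨111 * c + 55, by omega⟩
end

section
/- For every integer k ≥ 2 there are infinitely many positive integers n such that s_2(n) = s_2(n^2) = 6k. (One such family: n with binary representation 1^{(k)} 0 1^{(2k)} 0^{(R)} 1^{(k)} 0 1^{(2k)} for R ≥ 6k.) -/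
lemma sum_digits_pow_sub_one (m : ℕ) : (Nat.digits 2 (2 ^ m - 1)).sum = m := by
  induction m with
  | zero => simp
  | succ m ih =>
    have h1 : (2:ℕ) ^ (m+1) - 1 = 2 * (2 ^ m - 1) + 1 := by
      have : 1 ≤ (2:ℕ)^m := Nat.one_le_two_pow
      omega
    rw [h1, Nat.digits_def' (by norm_num : 1 < 2) (by omega)]
    simp [Nat.mul_add_div, Nat.mul_add_mod, ih]
    omega

lemma sum_digits_split (m n e : ℕ) (hm : 0 < m) (hn : n < 2 ^ e) :
    (Nat.digits 2 (m * 2 ^ e + n)).sum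
      = (Nat.digits 2 m).sum + (Nat.digits 2 n).sum := by
  have hl : (Nat.digits 2 n).length ≤ e := by
    rcases Nat.eq_zero_or_pos n with rfl | hnp
    · simp
    · rw [Nat.digits_len 2 n (by norm_num) (by omega)]
      have := (Nat.log_lt_iff_lt_pow (b := 2) (by norm_num) (by omega : n ≠ 0)).mpr hn
      omega
  have key : m * 2 ^ e + n
      = n + 2 ^ ((Nat.digits 2 n).length + (e - (Nat.digits 2 n).length)) * m := by
    rw [show (Nat.digits 2 n).length + (e - (Nat.digits 2 n).length) = e from by omega]
    ring
  rw [key, ← Nat.digits_append_zeroes_append_digits (by norm_num : 1 < 2) hm]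
  simp [List.sum_append, Nat.add_comm]

lemma sum_digits_two_mul (m : ℕ) (hm : 0 < m) :
    (Nat.digits 2 (2 * m)).sum = (Nat.digits 2 m).sum := by
  rw [Nat.digits_def' (by norm_num : 1 < 2) (by omega)]
  simp [Nat.mul_div_cancel_left, Nat.mul_mod_right]

theorem infinitely_many_6k (k : ℕ) (hk : 2 ≤ k) :
    {n : ℕ | 0 < n ∧ (Nat.digits 2 n).sum = 6 * k ∧
      (Nat.digits 2 (n ^ 2)).sum = 6 * k}.Infinite := by
  set A : ℕ := (2 ^ k - 1) * 2 ^ (2 * k + 1) + (2 ^ (2 * k) - 1) with hA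
  have h2k : (2:ℕ) ≤ 2 ^ k := by
    calc (2:ℕ) = 2^1 := rfl
    _ ≤ 2^k := Nat.pow_le_pow_right (by norm_num) (by omega)
  have h22k : (2:ℕ) ≤ 2 ^ (2*k) := by
    calc (2:ℕ) = 2^1 := rfl
    _ ≤ 2^(2*k) := Nat.pow_le_pow_right (by norm_num) (by omega)
  have hApos : 0 < A := by rw [hA]; omega
  -- key identity for A^2
  have keyA : A ^ 2 = ((2 ^ k - 1) * 2 ^ (2*k) + (2 ^ (k-2) - 1)) * 2 ^ (3*k+2)
      + (2 ^ (2*k+1) + 1) := by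
    obtain ⟨a, rfl⟩ : ∃ a, k = a + 2 := ⟨k - 2, by omega⟩
    have hs : a + 2 - 2 = a := by omega
    have ht : (1:ℕ) ≤ 2 ^ a := Nat.one_le_two_pow
    have h1 : (2:ℕ) ^ (a+2) = 2^a * 4 := by rw [pow_add]; norm_num
    have h2 : (2:ℕ) ^ (2*(a+2)) = 2^a * 2^a * 16 := by
      rw [show 2*(a+2) = a + (a + 4) from by ring, pow_add, pow_add]; ring
    have h3 : (2:ℕ) ^ (2*(a+2)+1) = 2^a * 2^a * 32 := by
      rw [show 2*(a+2)+1 = a + (a + 5) from by ring, pow_add, pow_add]; ring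
    have h4 : (2:ℕ) ^ (3*(a+2)+2) = 2^a * 2^a * 2^a * 256 := by
      rw [show 3*(a+2)+2 = a + (a + (a + 8)) from by ring, pow_add, pow_add, pow_add]; ring
    rw [hA, hs, h1, h2, h3, h4]
    zify [ht, show (1:ℕ) ≤ 2^a*4 from by omega,
      show (1:ℕ) ≤ 2^a*2^a*16 from by nlinarith]
    ring
  -- A < 2^(3k+1)
  have hAlt : A < 2 ^ (3*k+1) := by
    calc A < (2 ^ k - 1) * 2 ^ (2*k+1) + 2 ^ (2*k+1) := by
          have h1 : (2:ℕ)^(2*k) ≤ 2^(2*k+1) := Nat.pow_le_pow_right (by norm_num) (by omega)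
          rw [hA]
          omega
    _ = (2 ^ k - 1 + 1) * 2 ^ (2*k+1) := by ring
    _ = 2 ^ (3*k+1) := by
          rw [Nat.sub_add_cancel (by omega), ← pow_add]
          ring_nf
  -- digit sums
  have sA : (Nat.digits 2 A).sum = 3 * k := by
    rw [hA, sum_digits_split _ _ _ (by omega) (by
      have h1 : (2:ℕ)^(2*k) ≤ 2^(2*k+1) := Nat.pow_le_pow_right (by norm_num) (by omega)
      omega), sum_digits_pow_sub_one, sum_digits_pow_sub_one]
    omega
  have sA2 : (Nat.digits 2 (A ^ 2)).sum = 2 * k := by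
    have hmpos : 0 < (2 ^ k - 1) * 2 ^ (2*k) + (2 ^ (k-2) - 1) := by
      have : 0 < (2 ^ k - 1) * 2 ^ (2*k) := Nat.mul_pos (by omega) (by positivity)
      omega
    rw [keyA]
    rw [sum_digits_split _ _ _ hmpos (by
      have h5 : (2:ℕ)^(2*k+1) + 1 ≤ 2^(2*k+2) := by
        have e1 : (2:ℕ)^(2*k+2) = 2^(2*k+1) * 2 := by rw [pow_succ]
        have e2 : (1:ℕ) ≤ 2^(2*k+1) := Nat.one_le_two_pow
        omega
      have h6 : (2:ℕ)^(2*k+2) < 2^(3*k+2) :=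
        Nat.pow_lt_pow_right (by norm_num) (by omega)
      omega)]
    rw [sum_digits_split _ _ _ (by omega) (by
      have h7 : (2:ℕ)^(k-2) ≤ 2^(2*k) := Nat.pow_le_pow_right (by norm_num) (by omega)
      have h8 : (1:ℕ) ≤ 2^(k-2) := Nat.one_le_two_pow
      omega)]
    rw [show (2:ℕ)^(2*k+1) + 1 = 1 * 2^(2*k+1) + 1 from by ring]
    rw [sum_digits_split _ _ _ (by norm_num) (Nat.one_lt_two_pow_iff.mpr (by omega))]
    rw [sum_digits_pow_sub_one, sum_digits_pow_sub_one]
    norm_num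
    omega
  -- the family
  refine Set.infinite_of_injective_forall_mem
    (f := fun R : ℕ => A * 2 ^ (R + 6*k + 3) + A) ?_ ?_
  · intro R1 R2 h
    simp only at h
    have h' : A * 2 ^ (R1 + 6*k+3) = A * 2 ^ (R2 + 6*k+3) := by omega
    have h'' := Nat.eq_of_mul_eq_mul_left hApos h'
    have := Nat.pow_right_injective (le_refl 2) h''
    omega
  · intro R
    have hL : A < 2 ^ (R + 6*k + 3) := by
      calc A < 2^(3*k+1) := hAlt
      _ ≤ 2 ^ (R + 6*k+3) := Nat.pow_le_pow_right (by norm_num) (by omega)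
    have hA2L : 2 * A^2 < 2 ^ (R + 6*k + 3) := by
      have h1 : A^2 < 2^(3*k+1) * 2^(3*k+1) := by
        rw [pow_two]; exact Nat.mul_lt_mul_of_lt_of_lt hAlt hAlt
      have h2 : (2:ℕ)^(3*k+1) * 2^(3*k+1) = 2^(6*k+2) := by rw [← pow_add]; ring_nf
      have h3 : (2:ℕ)^(6*k+2) * 2 ≤ 2^(R+6*k+3) := by
        rw [← pow_succ]
        exact Nat.pow_le_pow_right (by norm_num) (by omega)
      omega
    refine ⟨by positivity, ?_, ?_⟩
    · rw [sum_digits_split _ _ _ hApos hL, sA]; omega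
    · have hsq : (A * 2 ^ (R + 6*k+3) + A)^2
          = (A^2 * 2^(R+6*k+3) + 2 * A^2) * 2^(R+6*k+3) + A^2 := by ring
      rw [hsq]
      rw [sum_digits_split _ _ _ (by positivity) (by omega)]
      rw [sum_digits_split _ _ _ (by positivity) hA2L]
      rw [sum_digits_two_mul _ (by positivity), sA2]
      omega
end
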